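/- Let δ, s > 0 and let E ⊆ ℝ^d be a set with s-dimensional Hausdorff content H^s_∞(E) = c > 0. Then there exists a (δ, s)-set P ⊆ E with #P ≳_d c · δ^{-s}, i.e., P is δ-separated, satisfies #(P ∩ B(x,r)) ≤ (r/δ)^s for all x ∈ ℝ^d and r ≥ δ, and has cardinality at least C_d · c · δ^{-s} for some constant C_d > 0 depending only on d. -/

import Mathlib

open Metric Set
open scoped ENNReal

/-- The `s`-dimensional Hausdorff content of a set `E ⊆ ℝ^d`:
`H^s_∞(E) = inf { Σ_i (diam U_i)^s : E ⊆ ∪_i U_i }`. -/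
noncomputable def hausdorffContent (d : ℕ) (s : ℝ) (E : Set (EuclideanSpace ℝ (Fin d))) : ℝ≥0∞ :=
  ⨅ (U : ℕ → Set (EuclideanSpace ℝ (Fin d))) (_ : E ⊆ ⋃ i, U i),
    ∑' i, EMetric.diam (U i) ^ s

open scoped Classical

abbrev Pt (d : ℕ) := EuclideanSpace ℝ (Fin d)
variable {d : ℕ}

lemma hc_le_of_cover {s : ℝ} {E : Set (Pt d)} (U : ℕ → Set (Pt d)) (hU : E ⊆ ⋃ i, U i) :
    hausdorffContent d s E ≤ ∑' i, EMetric.diam (U i) ^ s := by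
  unfold hausdorffContent; exact iInf₂_le U hU

lemma hc_le_diam {s : ℝ} (hs : 0 < s) (E : Set (Pt d)) :
    hausdorffContent d s E ≤ EMetric.diam E ^ s := by
  refine le_trans (hc_le_of_cover (fun n => if n = 0 then E else ∅) ?_) ?_
  · intro x hx
    exact mem_iUnion.2 ⟨0, by simpa using hx⟩
  · rw [tsum_eq_single 0 (fun b hb => ?_)]
    · simp
    · simp [hb, EMetric.diam, EMetric.diam_empty, ENNReal.zero_rpow_of_pos hs]

lemma hc_union {s : ℝ} (A B : Set (Pt d)) :
    hausdorffContent d s (A ∪ B) ≤ hausdorffContent d s A + hausdorffContent d s B := by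
  by_cases htop : hausdorffContent d s A + hausdorffContent d s B = ⊤
  · rw [htop]; exact le_top
  obtain ⟨hAt, hBt⟩ := ENNReal.add_ne_top.mp htop
  refine ENNReal.le_of_forall_pos_le_add fun ε hε _ => ?_
  have hε2 : ((ε : ℝ≥0∞) / 2) ≠ 0 := by
    simp [ENNReal.div_eq_zero_iff, ENNReal.coe_ne_zero, hε.ne']
  have hA : hausdorffContent d s A < hausdorffContent d s A + (ε : ℝ≥0∞) / 2 :=
    ENNReal.lt_add_right hAt hε2
  have hB : hausdorffContent d s B < hausdorffContent d s B + (ε : ℝ≥0∞) / 2 :=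
    ENNReal.lt_add_right hBt hε2
  unfold hausdorffContent at hA hB
  obtain ⟨U, hU⟩ := iInf_lt_iff.mp hA
  obtain ⟨hUcov, hUsum⟩ := iInf_lt_iff.mp hU
  obtain ⟨V, hV⟩ := iInf_lt_iff.mp hB
  obtain ⟨hVcov, hVsum⟩ := iInf_lt_iff.mp hV
  set W : ℕ → Set (Pt d) := fun n => if n % 2 = 0 then U (n / 2) else V (n / 2) with hW
  have hWcov : A ∪ B ⊆ ⋃ i, W i := by
    rintro y (hy | hy)
    · obtain ⟨i, hi⟩ := mem_iUnion.mp (hUcov hy)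
      refine mem_iUnion.2 ⟨2 * i, ?_⟩
      have e1 : (2 * i) % 2 = 0 := by omega
      have e2 : (2 * i) / 2 = i := by omega
      simp [hW, e1, e2, hi]
    · obtain ⟨i, hi⟩ := mem_iUnion.mp (hVcov hy)
      refine mem_iUnion.2 ⟨2 * i + 1, ?_⟩
      have e1 : (2 * i + 1) % 2 = 1 := by omega
      have e2 : (2 * i + 1) / 2 = i := by omega
      simp [hW, e1, e2, hi]
  have hWsum : ∑' i, EMetric.diam (W i) ^ s ≤
      (hausdorffContent d s A + (ε : ℝ≥0∞) / 2) + (hausdorffContent d s B + (ε : ℝ≥0∞) / 2) := by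
    rw [← tsum_even_add_odd (f := fun i => EMetric.diam (W i) ^ s)
      ENNReal.summable ENNReal.summable]
    have e1 : ∀ k : ℕ, W (2 * k) = U k := by
      intro k; have : (2 * k) % 2 = 0 := by omega
      have e2 : (2 * k) / 2 = k := by omega
      simp [hW, this, e2]
    have e2 : ∀ k : ℕ, W (2 * k + 1) = V k := by
      intro k; have h1 : (2 * k + 1) % 2 = 1 := by omega
      have h2 : (2 * k + 1) / 2 = k := by omega
      simp [hW, h1, h2]
    simp only [e1, e2]
    exact add_le_add hUsum.le hVsum.le
  calc hausdorffContent d s (A ∪ B) ≤ ∑' i, EMetric.diam (W i) ^ s := hc_le_of_cover W hWcov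
    _ ≤ _ := hWsum
    _ = hausdorffContent d s A + hausdorffContent d s B + ε := by
        rw [show ∀ a b c : ℝ≥0∞, (a + c) + (b + c) = a + b + (c + c) by intros; ring]
        rw [ENNReal.add_halves]

lemma hc_biUnion_le {s : ℝ} (hs : 0 < s) {ι : Type*} (t : Finset ι) (A : ι → Set (Pt d)) :
    hausdorffContent d s (⋃ i ∈ t, A i) ≤ ∑ i ∈ t, hausdorffContent d s (A i) := by
  induction t using Finset.induction with
  | empty =>
      simp only [Finset.notMem_empty, iUnion_of_empty, iUnion_empty, Finset.sum_empty]
      refine le_trans (hc_le_diam hs _) ?_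
      simp [EMetric.diam, EMetric.diam_empty, ENNReal.zero_rpow_of_pos hs]
  | insert _ _ h ih =>
      rw [Finset.sum_insert h]
      rw [Finset.set_biUnion_insert]
      exact le_trans (hc_union _ _) (add_le_add le_rfl ih)

lemma coord_le_dist (x y : Pt d) (i : Fin d) : |x i - y i| ≤ dist x y := by
  rw [EuclideanSpace.dist_eq]
  have h : |x i - y i| = Real.sqrt (dist (x i) (y i) ^ 2) := by
    rw [Real.sqrt_sq_eq_abs, Real.dist_eq, abs_abs]
  rw [h]
  exact Real.sqrt_le_sqrt (Finset.single_le_sum (f := fun j => dist (x j) (y j) ^ 2)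
    (fun j _ => sq_nonneg _) (Finset.mem_univ i))

def br (o : Fin d → ℝ) (ℓ : ℝ) (y z : Pt d) : Prop :=
  ∀ i, ⌊(y i - o i) / ℓ⌋ = ⌊(z i - o i) / ℓ⌋

lemma br_coord {o : Fin d → ℝ} {ℓ : ℝ} (hℓ : 0 < ℓ) {y z : Pt d} (h : br o ℓ y z) (i : Fin d) :
    |y i - z i| ≤ ℓ := by
  set a := (y i - o i) / ℓ
  set b := (z i - o i) / ℓ
  have hab : ⌊a⌋ = ⌊b⌋ := h i
  have h1 : (⌊a⌋ : ℝ) ≤ a := Int.floor_le a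
  have h2 : a < ⌊a⌋ + 1 := Int.lt_floor_add_one a
  have h3 : (⌊b⌋ : ℝ) ≤ b := Int.floor_le b
  have h4 : b < ⌊b⌋ + 1 := Int.lt_floor_add_one b
  have hd1 : |a - b| ≤ 1 := by
    rw [abs_le]; rw [hab] at h1 h2; constructor <;> linarith
  have : |y i - z i| = |a - b| * ℓ := by
    have hab2 : a - b = (y i - z i) / ℓ := by
      simp only [a, b]
      field_simp
      ring
    rw [hab2, abs_div, abs_of_pos hℓ, div_mul_cancel₀ _ hℓ.ne']
  rw [this]
  calc |a - b| * ℓ ≤ 1 * ℓ := by nlinarith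
    _ = ℓ := one_mul ℓ

lemma br_dist {o : Fin d → ℝ} {ℓ : ℝ} (hℓ : 0 < ℓ) {y z : Pt d} (h : br o ℓ y z) :
    dist y z ≤ Real.sqrt d * ℓ := by
  rw [EuclideanSpace.dist_eq]
  have hsum : ∑ i, dist (y i) (z i) ^ 2 ≤ (d : ℝ) * ℓ ^ 2 := by
    have hterm : ∀ i : Fin d, dist (y i) (z i) ^ 2 ≤ ℓ ^ 2 := by
      intro i
      have h1 : |y i - z i| ≤ ℓ := br_coord hℓ h i
      rw [Real.dist_eq]
      nlinarith [abs_nonneg (y i - z i)]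
    have := Finset.sum_le_sum (fun i (_ : i ∈ Finset.univ) => hterm i)
    simpa [Finset.sum_const, Finset.card_univ, mul_comm] using this
  have h2 : Real.sqrt ((d : ℝ) * ℓ ^ 2) = Real.sqrt d * ℓ := by
    rw [Real.sqrt_mul (Nat.cast_nonneg d), Real.sqrt_sq hℓ.le]
  exact le_trans (Real.sqrt_le_sqrt hsum) (le_of_eq h2)

lemma hc_le_box (hd : 0 < d) {s : ℝ} (hs : 0 < s) {o : Fin d → ℝ} {ℓ : ℝ} (hℓ : 0 < ℓ)
    {z₀ : Pt d} {E : Set (Pt d)} (hE : E ⊆ {y | br o ℓ y z₀}) :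
    hausdorffContent d s E ≤ ENNReal.ofReal ((Real.sqrt d * ℓ) ^ s) := by
  have h1 : EMetric.diam E ≤ ENNReal.ofReal (Real.sqrt d * ℓ) := by
    refine EMetric.diam_le fun x hx y hy => ?_
    rw [edist_dist]
    refine ENNReal.ofReal_le_ofReal (br_dist (o := o) hℓ ?_)
    intro i
    exact (hE hx i).trans (hE hy i).symm
  have hpos : 0 < Real.sqrt d * ℓ := by
    have : (0:ℝ) < Real.sqrt d := Real.sqrt_pos.2 (by exact_mod_cast hd)
    positivity
  calc hausdorffContent d s E ≤ EMetric.diam E ^ s := hc_le_diam hs E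
    _ ≤ ENNReal.ofReal (Real.sqrt d * ℓ) ^ s := ENNReal.rpow_le_rpow h1 hs.le
    _ = ENNReal.ofReal ((Real.sqrt d * ℓ) ^ s) := ENNReal.ofReal_rpow_of_pos hpos

lemma br_double {o : Fin d → ℝ} {ℓ : ℝ} (hℓ : 0 < ℓ) {y z : Pt d} (h : br o ℓ y z) :
    br o (2 * ℓ) y z := by
  have key : ∀ (a : ℝ) (m : ℤ), 2 * m ≤ ⌊a / ℓ⌋ → ⌊a / ℓ⌋ < 2 * m + 2 → ⌊a / (2 * ℓ)⌋ = m := by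
    intro a m hm1 hm2
    have h1 : (⌊a / ℓ⌋ : ℝ) ≤ a / ℓ := Int.floor_le _
    have h2 : a / ℓ < ⌊a / ℓ⌋ + 1 := Int.lt_floor_add_one _
    have hm1' : (2 * m : ℝ) ≤ ⌊a / ℓ⌋ := by exact_mod_cast hm1
    have hm2' : (⌊a / ℓ⌋ : ℝ) ≤ 2 * m + 1 := by exact_mod_cast (by omega : ⌊a / ℓ⌋ ≤ 2 * m + 1)
    have he : a / (2 * ℓ) = (a / ℓ) / 2 := by
      rw [mul_comm, ← div_div]
    refine Int.floor_eq_iff.mpr ⟨?_, ?_⟩ <;> rw [he] <;> push_cast <;> linarith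
  intro i
  obtain ⟨m, hm⟩ | ⟨m, hm⟩ := Int.even_or_odd ⌊(y i - o i) / ℓ⌋ <;>
  · have h1 := h i
    rw [key (y i - o i) m (by omega) (by omega), key (z i - o i) m (by omega) (by omega)]

lemma br_scale {o : Fin d → ℝ} {δ₀ : ℝ} (hδ₀ : 0 < δ₀) {k n : ℕ} (hkn : k ≤ n) {y z : Pt d}
    (h : br o (δ₀ * 2 ^ k) y z) : br o (δ₀ * 2 ^ n) y z := by
  induction n with
  | zero => exact (Nat.le_zero.mp hkn) ▸ h
  | succ n ih =>
      rcases Nat.le_succ_iff.mp hkn with hkn' | hkn'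
      · have hb := br_double (by positivity : (0:ℝ) < δ₀ * 2 ^ n) (ih hkn')
        have : 2 * (δ₀ * 2 ^ n) = δ₀ * 2 ^ (n + 1) := by ring
        rwa [this] at hb
      · subst hkn'; exact h

noncomputable def T (s : ℝ) (k : ℕ) : ℕ := ⌊((2 : ℝ) ^ k) ^ s⌋₊

lemma one_le_T {s : ℝ} (hs : 0 ≤ s) (k : ℕ) : 1 ≤ T s k := by
  refine Nat.le_floor ?_
  rw [Nat.cast_one]
  exact Real.one_le_rpow (one_le_pow₀ one_le_two) hs

lemma T_le {s : ℝ} (k : ℕ) : (T s k : ℝ) ≤ ((2 : ℝ) ^ k) ^ s :=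
  Nat.floor_le (Real.rpow_nonneg (by positivity) s)

lemma le_two_T {s : ℝ} (hs : 0 ≤ s) (k : ℕ) : ((2 : ℝ) ^ k) ^ s ≤ 2 * T s k := by
  have h1 : (1 : ℝ) ≤ (T s k : ℝ) := by exact_mod_cast one_le_T hs k
  have h2 : ((2 : ℝ) ^ k) ^ s < (T s k : ℝ) + 1 := Nat.lt_floor_add_one _
  linarith

lemma T_zero {s : ℝ} : T s 0 = 1 := by
  simp [T]

lemma box_cover {o : Fin d → ℝ} {ℓ ρ : ℝ} (hℓ : 0 < ℓ) (hρ : 0 ≤ ρ) (h2 : 2 * ρ ≤ ℓ)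
    (S : Finset (Pt d)) (m : ℕ)
    (hS : ∀ z : Pt d, (S.filter (fun p => br o ℓ p z)).card ≤ m) (x : Pt d) :
    (S.filter (fun p => p ∈ closedBall x ρ)).card ≤ 2 ^ d * m := by
  set w : Fin d → ℤ := fun i => ⌊(x i - ρ - o i) / ℓ⌋ with hw
  set zb : (Fin d → Bool) → Pt d := fun b =>
    (WithLp.equiv 2 (Fin d → ℝ)).symm
      (fun i => o i + ((w i + if b i then 1 else 0 : ℤ) : ℝ) * ℓ) with hzb
  have hzbf : ∀ b i, ⌊(zb b i - o i) / ℓ⌋ = w i + (if b i then 1 else 0) := by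
    intro b i
    have : zb b i = o i + ((w i + if b i then 1 else 0 : ℤ) : ℝ) * ℓ := by
      simp [hzb, PiLp.toLp_apply]
    rw [this, add_sub_cancel_left, mul_div_cancel_right₀ _ hℓ.ne', Int.floor_intCast]
  have key : ∀ p ∈ S.filter (fun p => p ∈ closedBall x ρ),
      ∃ b : Fin d → Bool, br o ℓ p (zb b) := by
    intro p hp
    rw [Finset.mem_filter] at hp
    have hdist : dist p x ≤ ρ := mem_closedBall.mp hp.2
    have hfl : ∀ i, ⌊(p i - o i) / ℓ⌋ = w i ∨ ⌊(p i - o i) / ℓ⌋ = w i + 1 := by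
      intro i
      have hco : |p i - x i| ≤ ρ := le_trans (coord_le_dist p x i) hdist
      rw [abs_le] at hco
      have hle : w i ≤ ⌊(p i - o i) / ℓ⌋ := by
        refine Int.floor_le_floor ?_
        gcongr
        linarith [hco.1]
      have hge : ⌊(p i - o i) / ℓ⌋ ≤ w i + 1 := by
        have h3 : (p i - o i) / ℓ ≤ (x i - ρ - o i) / ℓ + 1 := by
          have he : (x i - ρ - o i) / ℓ + 1 = (x i - ρ - o i + ℓ) / ℓ := by
            field_simp
          rw [he]
          gcongr
          linarith [hco.2]
        calc ⌊(p i - o i) / ℓ⌋ ≤ ⌊(x i - ρ - o i) / ℓ + 1⌋ := Int.floor_le_floor h3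
          _ = w i + 1 := by rw [Int.floor_add_one]
      omega
    refine ⟨fun i => decide (⌊(p i - o i) / ℓ⌋ = w i + 1), fun i => ?_⟩
    rw [hzbf]
    by_cases hcase : ⌊(p i - o i) / ℓ⌋ = w i + 1
    · simp [hcase]
    · rcases hfl i with h | h
      · simp [hcase, h]
      · exact absurd h hcase
  have hsub : S.filter (fun p => p ∈ closedBall x ρ) ⊆
      Finset.univ.biUnion (fun b : Fin d → Bool => S.filter (fun p => br o ℓ p (zb b))) := by
    intro p hp
    obtain ⟨b, hb⟩ := key p hp
    exact Finset.mem_biUnion.2 ⟨b, Finset.mem_univ _,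
      Finset.mem_filter.2 ⟨(Finset.mem_filter.mp hp).1, hb⟩⟩
  calc (S.filter (fun p => p ∈ closedBall x ρ)).card
      ≤ (Finset.univ.biUnion
          (fun b : Fin d → Bool => S.filter (fun p => br o ℓ p (zb b)))).card :=
        Finset.card_le_card hsub
    _ ≤ ∑ b : Fin d → Bool, (S.filter (fun p => br o ℓ p (zb b))).card :=
        Finset.card_biUnion_le
    _ ≤ ∑ _b : Fin d → Bool, m := Finset.sum_le_sum fun b _ => hS (zb b)
    _ = 2 ^ d * m := by
        simp [Finset.sum_const, Finset.card_univ, mul_comm]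

lemma net {τ : ℝ} (hτ : 0 < τ) (S : Finset (Pt d)) :
    ∃ P : Finset (Pt d), P ⊆ S ∧ (∀ p ∈ P, ∀ q ∈ P, p ≠ q → τ ≤ dist p q) ∧
      ∀ q ∈ S, ∃ p ∈ P, dist q p < τ := by
  suffices h : ∀ (N : ℕ) (S : Finset (Pt d)), S.card ≤ N →
      ∃ P : Finset (Pt d), P ⊆ S ∧ (∀ p ∈ P, ∀ q ∈ P, p ≠ q → τ ≤ dist p q) ∧
        ∀ q ∈ S, ∃ p ∈ P, dist q p < τ from h S.card S le_rfl
  intro N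
  induction N with
  | zero =>
      intro S hS
      rw [Nat.le_zero, Finset.card_eq_zero] at hS
      subst hS
      exact ⟨∅, Finset.Subset.refl _, by simp, by simp⟩
  | succ N ih =>
      intro S hS
      rcases S.eq_empty_or_nonempty with rfl | ⟨a, ha⟩
      · exact ⟨∅, Finset.Subset.refl _, by simp, by simp⟩
      set S' := S.filter (fun q => τ ≤ dist a q) with hS'
      have hssub : S' ⊂ S := by
        refine Finset.ssubset_iff_of_subset (Finset.filter_subset _ _) |>.mpr ?_
        refine ⟨a, ha, ?_⟩
        simp [hS', ha]
        simpa [dist_self] using hτ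
      have hcard : S'.card ≤ N := by
        have := Finset.card_lt_card hssub
        omega
      obtain ⟨P', hP'sub, hP'sep, hP'cov⟩ := ih S' hcard
      refine ⟨insert a P', ?_, ?_, ?_⟩
      · exact Finset.insert_subset ha (hP'sub.trans (Finset.filter_subset _ _))
      · intro p hp q hq hpq
        rcases Finset.mem_insert.mp hp with rfl | hp' <;>
          rcases Finset.mem_insert.mp hq with rfl | hq'
        · exact absurd rfl hpq
        · exact (Finset.mem_filter.mp (hP'sub hq')).2
        · rw [dist_comm]
          exact (Finset.mem_filter.mp (hP'sub hp')).2
        · exact hP'sep p hp' q hq' hpq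
      · intro q hq
        by_cases hqa : τ ≤ dist a q
        · obtain ⟨p, hp, hpd⟩ := hP'cov q (Finset.mem_filter.mpr ⟨hq, hqa⟩)
          exact ⟨p, Finset.mem_insert_of_mem hp, hpd⟩
        · exact ⟨a, Finset.mem_insert_self _ _, by rw [dist_comm]; linarith [not_le.mp hqa]⟩

lemma hc_mono {s : ℝ} {A B : Set (Pt d)} (h : A ⊆ B) :
    hausdorffContent d s A ≤ hausdorffContent d s B := by
  unfold hausdorffContent
  exact le_iInf₂ fun U hU => iInf₂_le U (h.trans hU)

lemma hc_zero_of_gt (hd : 0 < d) {s : ℝ} (hds : (d : ℝ) < s) {E : Set (Pt d)}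
    (hb : Bornology.IsBounded E) : hausdorffContent d s E = 0 := by
  have hs : 0 < s := lt_of_le_of_lt (Nat.cast_nonneg d) hds
  have hsd : (0:ℝ) < Real.sqrt d := Real.sqrt_pos.2 (by exact_mod_cast hd)
  obtain ⟨R₀, hR₀⟩ := hb.subset_closedBall 0
  set R : ℝ := |R₀| + 1 with hR
  have hR1 : (1:ℝ) ≤ R := by rw [hR]; linarith [abs_nonneg R₀]
  have hRE : E ⊆ closedBall 0 R :=
    hR₀.trans (closedBall_subset_closedBall (by simp [hR]; linarith [le_abs_self R₀]))
  set L : ℝ := 2 * R + 2 with hL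
  have hLpos : (0:ℝ) < L := by positivity
  have key : ∀ M : ℕ, 1 ≤ M → hausdorffContent d s E ≤
      ENNReal.ofReal (((M : ℝ) ^ d) * (Real.sqrt d * (L / M)) ^ s) := by
    intro M hM
    have hMpos : (0:ℝ) < M := by exact_mod_cast hM
    set ℓ : ℝ := L / M with hℓdef
    have hℓ : 0 < ℓ := by positivity
    set o : Fin d → ℝ := fun _ => -(R + 1) with ho
    set zv : (Fin d → Fin M) → Pt d := fun v =>
      (WithLp.equiv 2 (Fin d → ℝ)).symm (fun i => o i + (v i : ℝ) * ℓ) with hzv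
    have hzvf : ∀ v i, ⌊(zv v i - o i) / ℓ⌋ = (v i : ℕ) := by
      intro v i
      have : zv v i = o i + (v i : ℝ) * ℓ := by simp [hzv, PiLp.toLp_apply]
      rw [this, add_sub_cancel_left, mul_div_cancel_right₀ _ hℓ.ne']
      exact_mod_cast Int.floor_intCast ((v i : ℕ) : ℤ)
    have hcov : E ⊆ ⋃ v ∈ (Finset.univ : Finset (Fin d → Fin M)), {y | br o ℓ y (zv v)} := by
      intro y hy
      have hyc : ∀ i, |y i| ≤ R := by
        intro i
        have h0 : (0 : Pt d) i = 0 := rfl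
        have hc := coord_le_dist y 0 i
        rw [h0, sub_zero] at hc
        exact hc.trans (mem_closedBall.mp (hRE hy))
      have hk : ∀ i, 0 ≤ ⌊(y i - o i) / ℓ⌋ ∧ ⌊(y i - o i) / ℓ⌋ < M := by
        intro i
        have h1 : (0:ℝ) ≤ (y i - o i) / ℓ := by
          apply div_nonneg _ hℓ.le
          have := abs_le.mp (hyc i)
          simp only [ho]
          linarith [this.1]
        have h2 : (y i - o i) / ℓ < M := by
          rw [div_lt_iff₀ hℓ]
          have hMℓ : (M:ℝ) * ℓ = L := by rw [hℓdef]; field_simp [hMpos.ne']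
          rw [hMℓ]
          have := abs_le.mp (hyc i)
          simp only [ho, hL]
          linarith [this.2]
        constructor
        · exact Int.floor_nonneg.mpr h1
        · exact_mod_cast Int.floor_lt.mpr (by exact_mod_cast h2)
      set v : Fin d → Fin M := fun i => ⟨(⌊(y i - o i) / ℓ⌋).toNat, by
        have := hk i; omega⟩ with hv
      refine mem_biUnion (Finset.mem_univ v) ?_
      intro i
      rw [hzvf]
      simp only [hv]
      have := hk i
      omega
    calc hausdorffContent d s E
        ≤ hausdorffContent d s (⋃ v ∈ (Finset.univ : Finset (Fin d → Fin M)),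
            {y | br o ℓ y (zv v)}) := hc_mono hcov
      _ ≤ ∑ v : Fin d → Fin M, hausdorffContent d s {y | br o ℓ y (zv v)} :=
          hc_biUnion_le hs _ _
      _ ≤ ∑ _v : Fin d → Fin M, ENNReal.ofReal ((Real.sqrt d * ℓ) ^ s) :=
          Finset.sum_le_sum fun v _ => hc_le_box hd hs hℓ (Set.Subset.refl _)
      _ = (M ^ d : ℕ) * ENNReal.ofReal ((Real.sqrt d * ℓ) ^ s) := by
          rw [Finset.sum_const, Finset.card_univ]
          simp [Fintype.card_fun, nsmul_eq_mul]
      _ = ENNReal.ofReal (((M : ℝ) ^ d) * (Real.sqrt d * ℓ) ^ s) := by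
          rw [ENNReal.ofReal_mul (by positivity)]
          congr 1
          · rw [← ENNReal.ofReal_natCast]
            congr 1
            push_cast
            ring
  refine le_antisymm ?_ zero_le
  refine ENNReal.le_of_forall_pos_le_add fun ε hε _ => ?_
  rw [zero_add]
  set β : ℝ := s - d with hβ
  have hβpos : 0 < β := by simp [hβ]; linarith
  set Cc : ℝ := (Real.sqrt d * L) ^ s with hCc
  have hCpos : 0 < Cc := Real.rpow_pos_of_pos (by positivity) s
  have hεR : (0:ℝ) < (ε:ℝ) := hε
  obtain ⟨M, hMgt⟩ := exists_nat_gt (max 1 ((Cc / ε) ^ (1/β)))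
  have hM1 : 1 ≤ M := by
    have := lt_of_le_of_lt (le_max_left _ _) hMgt
    exact_mod_cast this.le
  have hMpos : (0:ℝ) < M := by exact_mod_cast hM1
  have hMβ : Cc / (ε:ℝ) ≤ (M:ℝ) ^ β := by
    have h1 : ((Cc / ε) ^ (1/β) : ℝ) ≤ (M:ℝ) := (le_max_right _ _).trans hMgt.le
    calc Cc / (ε:ℝ) = ((Cc / ε) ^ (1/β)) ^ β := by
          rw [← Real.rpow_mul (div_nonneg hCpos.le hεR.le), one_div_mul_cancel hβpos.ne',
            Real.rpow_one]
      _ ≤ (M:ℝ) ^ β := Real.rpow_le_rpow (Real.rpow_nonneg (by positivity) _) h1 hβpos.le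
  have hbound : ((M : ℝ) ^ d) * (Real.sqrt d * (L / M)) ^ s ≤ (ε:ℝ) := by
    have he1 : (Real.sqrt d * (L / M)) ^ s = Cc * ((M:ℝ) ^ s)⁻¹ := by
      rw [show Real.sqrt d * (L / M) = (Real.sqrt d * L) / M by ring,
        Real.div_rpow (by positivity) hMpos.le, div_eq_mul_inv]
    rw [he1]
    have he3 : ((M:ℝ) ^ d) * (Cc * ((M:ℝ) ^ s)⁻¹) = Cc * ((M:ℝ) ^ (d:ℝ) / (M:ℝ) ^ s) := by
      rw [Real.rpow_natCast]; ring
    have he4 : (M:ℝ) ^ (d:ℝ) / (M:ℝ) ^ s = ((M:ℝ) ^ β)⁻¹ := by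
      rw [← Real.rpow_sub hMpos, show (d:ℝ) - s = -β by rw [hβ]; ring,
        Real.rpow_neg hMpos.le]
    rw [he3, he4]
    have hfin : Cc ≤ (M:ℝ) ^ β * ε := by rwa [div_le_iff₀ hεR] at hMβ
    have hMβpos : (0:ℝ) < (M:ℝ) ^ β := Real.rpow_pos_of_pos hMpos β
    calc Cc * ((M:ℝ) ^ β)⁻¹ ≤ ((M:ℝ) ^ β * ε) * ((M:ℝ) ^ β)⁻¹ := by
          exact mul_le_mul_of_nonneg_right hfin (by positivity)
      _ = ε := by field_simp
  calc hausdorffContent d s E ≤ _ := key M hM1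
    _ ≤ ENNReal.ofReal (ε:ℝ) := ENNReal.ofReal_le_ofReal hbound
    _ = (ε : ℝ≥0∞) := ENNReal.ofReal_coe_nnreal




lemma main (hd : 0 < d) {s : ℝ} (hs : 0 < s) {δ₀ : ℝ} (hδ₀ : 0 < δ₀) (o : Fin d → ℝ)
    (n : ℕ) : ∀ (z₀ : Pt d) (E : Set (Pt d)), E ⊆ {y | br o (δ₀ * 2 ^ n) y z₀} →
    ∃ P : Finset (Pt d), ↑P ⊆ E ∧
      (∀ k, k ≤ n → ∀ z : Pt d, (P.filter (fun p => br o (δ₀ * 2 ^ k) p z)).card ≤ T s k) ∧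
      hausdorffContent d s E ≤
        (P.card : ℝ≥0∞) * ENNReal.ofReal (2 * (Real.sqrt d * δ₀) ^ s) := by
  induction n with
  | zero =>
      intro z₀ E hE
      rcases E.eq_empty_or_nonempty with rfl | ⟨x₀, hx₀⟩
      · refine ⟨∅, by simp, by simp, ?_⟩
        have h0 : hausdorffContent d s (∅ : Set (Pt d)) ≤ 0 := by
          refine le_trans (hc_le_diam hs ∅) ?_
          simp [EMetric.diam, EMetric.diam_empty, ENNReal.zero_rpow_of_pos hs]
        exact h0.trans zero_le
      · refine ⟨{x₀}, by simpa using hx₀, ?_, ?_⟩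
        · intro k hk z
          calc (Finset.filter (fun p => br o (δ₀ * 2 ^ k) p z) {x₀}).card
              ≤ ({x₀} : Finset (Pt d)).card := Finset.card_filter_le _ _
            _ = 1 := Finset.card_singleton x₀
            _ ≤ T s k := one_le_T hs.le k
        · have h1 := hc_le_box hd hs (show (0:ℝ) < δ₀ * 2 ^ 0 by positivity) hE
          refine h1.trans ?_
          rw [Finset.card_singleton, Nat.cast_one, one_mul]
          apply ENNReal.ofReal_le_ofReal
          have h2 : (0:ℝ) ≤ (Real.sqrt d * δ₀) ^ s := Real.rpow_nonneg (by positivity) s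
          have h3 : Real.sqrt d * (δ₀ * 2 ^ 0) = Real.sqrt d * δ₀ := by ring
          rw [h3]
          linarith
  | succ n ih =>
      intro z₀ E hE
      set ℓ : ℝ := δ₀ * 2 ^ n with hℓdef
      have hℓ : 0 < ℓ := by positivity
      set w : Fin d → ℤ := fun i => ⌊(z₀ i - o i) / (δ₀ * 2 ^ (n+1))⌋ with hw
      set zb : (Fin d → Bool) → Pt d := fun b =>
        (WithLp.equiv 2 (Fin d → ℝ)).symm
          (fun i => o i + ((2 * w i + if b i then 1 else 0 : ℤ) : ℝ) * ℓ) with hzb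
      have hzbf : ∀ b i, ⌊(zb b i - o i) / ℓ⌋ = 2 * w i + (if b i then 1 else 0) := by
        intro b i
        have he : zb b i = o i + ((2 * w i + if b i then 1 else 0 : ℤ) : ℝ) * ℓ := by
          simp [hzb, PiLp.toLp_apply]
        rw [he, add_sub_cancel_left, mul_div_cancel_right₀ _ hℓ.ne', Int.floor_intCast]
      have hcover : ∀ y ∈ E, ∃ b, br o ℓ y (zb b) := by
        intro y hy
        have hybox : ∀ i, ⌊(y i - o i) / (δ₀ * 2 ^ (n+1))⌋ = w i := hE hy
        have hfl : ∀ i, ⌊(y i - o i) / ℓ⌋ = 2 * w i ∨ ⌊(y i - o i) / ℓ⌋ = 2 * w i + 1 := by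
          intro i
          have h1 : ((w i : ℝ)) ≤ (y i - o i) / (δ₀ * 2 ^ (n+1)) := by
            rw [← hybox i]; exact Int.floor_le _
          have h2 : (y i - o i) / (δ₀ * 2 ^ (n+1)) < w i + 1 := by
            rw [← hybox i]; exact Int.lt_floor_add_one _
          have hee : (y i - o i) / ℓ = 2 * ((y i - o i) / (δ₀ * 2 ^ (n+1))) := by
            rw [hℓdef]
            have hpow : (2:ℝ) ^ (n+1) = 2 * 2 ^ n := by ring
            rw [hpow]
            field_simp
          have h3 : (2 * (w i) : ℝ) ≤ (y i - o i) / ℓ := by rw [hee]; linarith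
          have h4 : (y i - o i) / ℓ < 2 * (w i) + 2 := by rw [hee]; linarith
          have h5 : 2 * w i ≤ ⌊(y i - o i) / ℓ⌋ := Int.le_floor.mpr (by push_cast; linarith)
          have h6 : ⌊(y i - o i) / ℓ⌋ < 2 * w i + 2 := Int.floor_lt.mpr (by push_cast; linarith)
          omega
        refine ⟨fun i => decide (⌊(y i - o i) / ℓ⌋ = 2 * w i + 1), fun i => ?_⟩
        rw [hzbf]
        by_cases hcase : ⌊(y i - o i) / ℓ⌋ = 2 * w i + 1
        · simp [hcase]
        · rcases hfl i with h | h
          · simp [hcase, h]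
          · exact absurd h hcase
      set Eb : (Fin d → Bool) → Set (Pt d) := fun b => E ∩ {y | br o ℓ y (zb b)} with hEbdef
      have hEbsub : ∀ b, Eb b ⊆ {y | br o ℓ y (zb b)} := fun b => inter_subset_right
      choose Pb hPb1 hPb2 hPb3 using fun b => ih (zb b) (Eb b) (hEbsub b)
      set P' : Finset (Pt d) := Finset.univ.biUnion Pb with hP'
      have hbr_b : ∀ b p, p ∈ Pb b → br o ℓ p (zb b) := fun b p hp => (hPb1 b hp).2
      have hbeq : ∀ b b' (p q : Pt d), br o ℓ p (zb b) → br o ℓ q (zb b') →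
          br o ℓ p q → b = b' := by
        intro b b' p q hp hq hpq
        funext i
        have h1 : 2 * w i + (if b i then 1 else 0) = 2 * w i + (if b' i then 1 else 0) := by
          rw [← hzbf b i, ← hzbf b' i, ← hp i, ← hq i, hpq i]
        by_cases hb : b i <;> by_cases hb' : b' i <;> simp [hb, hb'] at h1 ⊢ <;> omega
      have hdisj : ∀ b ∈ (Finset.univ : Finset (Fin d → Bool)), ∀ b' ∈ Finset.univ,
          b ≠ b' → Disjoint (Pb b) (Pb b') := by
        intro b _ b' _ hbb'
        rw [Finset.disjoint_left]
        intro p hp hp'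
        exact hbb' (hbeq b b' p p (hbr_b b p hp) (hbr_b b' p hp') (fun i => rfl))
      have hP'card : P'.card = ∑ b : Fin d → Bool, (Pb b).card := Finset.card_biUnion hdisj
      have hP'subE : ↑P' ⊆ E := by
        intro p hp
        rw [Finset.mem_coe, hP', Finset.mem_biUnion] at hp
        obtain ⟨b, _, hb⟩ := hp
        exact (hPb1 b hb).1
      have hcount' : ∀ k, k ≤ n → ∀ z : Pt d,
          (P'.filter (fun p => br o (δ₀ * 2 ^ k) p z)).card ≤ T s k := by
        intro k hk z
        rw [hP', Finset.filter_biUnion]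
        refine le_trans Finset.card_biUnion_le ?_
        by_cases hex : ∃ b₀, ∃ p ∈ Pb b₀, br o (δ₀ * 2 ^ k) p z
        · obtain ⟨b₀, p₀, hp₀, hp₀z⟩ := hex
          have hzero : ∀ b ∈ (Finset.univ : Finset (Fin d → Bool)), b ≠ b₀ →
              ((Pb b).filter (fun p => br o (δ₀ * 2 ^ k) p z)).card = 0 := by
            intro b _ hb
            rw [Finset.card_eq_zero, Finset.filter_eq_empty_iff]
            intro q hq hqz
            have hqp : br o (δ₀ * 2 ^ k) q p₀ := fun i => (hqz i).trans (hp₀z i).symm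
            have hqpn : br o ℓ q p₀ := br_scale hδ₀ hk hqp
            exact hb (hbeq b b₀ q p₀ (hbr_b b q hq) (hbr_b b₀ p₀ hp₀) hqpn)
          rw [Finset.sum_eq_single b₀ hzero (fun h => absurd (Finset.mem_univ b₀) h)]
          exact hPb2 b₀ k hk z
        · push_neg at hex
          have hzero : ∀ b ∈ (Finset.univ : Finset (Fin d → Bool)),
              ((Pb b).filter (fun p => br o (δ₀ * 2 ^ k) p z)).card = 0 := by
            intro b _
            rw [Finset.card_eq_zero, Finset.filter_eq_empty_iff]
            exact fun q hq => hex b q hq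
          rw [Finset.sum_eq_zero hzero]
          exact Nat.zero_le _
      have hmass' : hausdorffContent d s E ≤
          (P'.card : ℝ≥0∞) * ENNReal.ofReal (2 * (Real.sqrt d * δ₀) ^ s) := by
        have hEcov : E ⊆ ⋃ b ∈ (Finset.univ : Finset (Fin d → Bool)), Eb b := by
          intro y hy
          obtain ⟨b, hb⟩ := hcover y hy
          exact mem_biUnion (Finset.mem_univ b) ⟨hy, hb⟩
        calc hausdorffContent d s E
            ≤ hausdorffContent d s (⋃ b ∈ (Finset.univ : Finset (Fin d → Bool)), Eb b) :=
              hc_mono hEcov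
          _ ≤ ∑ b : Fin d → Bool, hausdorffContent d s (Eb b) := hc_biUnion_le hs _ _
          _ ≤ ∑ b : Fin d → Bool, (Pb b).card *
                ENNReal.ofReal (2 * (Real.sqrt d * δ₀) ^ s) :=
              Finset.sum_le_sum fun b _ => hPb3 b
          _ = (P'.card : ℝ≥0∞) * ENNReal.ofReal (2 * (Real.sqrt d * δ₀) ^ s) := by
              rw [← Finset.sum_mul, hP'card]
              congr 1
              push_cast
              rfl
      by_cases hbig : P'.card ≤ T s (n+1)
      · refine ⟨P', hP'subE, ?_, hmass'⟩
        intro k hk z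
        rcases Nat.le_succ_iff.mp hk with hk' | hk'
        · exact hcount' k hk' z
        · subst hk'
          exact le_trans (Finset.card_filter_le _ _) hbig
      · obtain ⟨P, hPsub, hPcard⟩ :=
          Finset.exists_subset_card_eq (show T s (n+1) ≤ P'.card by omega)
        refine ⟨P, (Finset.coe_subset.mpr hPsub).trans hP'subE, ?_, ?_⟩
        · intro k hk z
          rcases Nat.le_succ_iff.mp hk with hk' | hk'
          · exact le_trans (Finset.card_le_card
              (Finset.filter_subset_filter _ hPsub)) (hcount' k hk' z)
          · subst hk'
            rw [← hPcard]
            exact Finset.card_filter_le _ _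
        · have h1 := hc_le_box hd hs (show (0:ℝ) < δ₀ * 2 ^ (n+1) by positivity) hE
          refine h1.trans ?_
          have h2 : (Real.sqrt d * (δ₀ * 2 ^ (n+1))) ^ s
              ≤ (T s (n+1) : ℝ) * (2 * (Real.sqrt d * δ₀) ^ s) := by
            have e1 : Real.sqrt d * (δ₀ * 2 ^ (n+1)) =
                (Real.sqrt d * δ₀) * ((2:ℝ) ^ (n+1)) := by ring
            rw [e1, Real.mul_rpow (by positivity) (by positivity)]
            have e2 := le_two_T hs.le (n+1)
            have e3 : (0:ℝ) ≤ (Real.sqrt d * δ₀) ^ s := Real.rpow_nonneg (by positivity) s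
            calc (Real.sqrt d * δ₀) ^ s * ((2:ℝ) ^ (n+1)) ^ s
                ≤ (Real.sqrt d * δ₀) ^ s * (2 * T s (n+1)) :=
                  mul_le_mul_of_nonneg_left e2 e3
              _ = (T s (n+1) : ℝ) * (2 * (Real.sqrt d * δ₀) ^ s) := by ring
          calc ENNReal.ofReal ((Real.sqrt d * (δ₀ * 2 ^ (n+1))) ^ s)
              ≤ ENNReal.ofReal ((T s (n+1) : ℝ) * (2 * (Real.sqrt d * δ₀) ^ s)) :=
                ENNReal.ofReal_le_ofReal h2
            _ = (T s (n+1) : ℝ≥0∞) * ENNReal.ofReal (2 * (Real.sqrt d * δ₀) ^ s) := by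
                rw [ENNReal.ofReal_mul (by positivity), ENNReal.ofReal_natCast]
            _ = (P.card : ℝ≥0∞) * ENNReal.ofReal (2 * (Real.sqrt d * δ₀) ^ s) := by
                rw [hPcard]



lemma hc_exists_cover {s : ℝ} {E : Set (Pt d)} {b : ℝ≥0∞} (h : hausdorffContent d s E < b) :
    ∃ U : ℕ → Set (Pt d), E ⊆ ⋃ i, U i ∧ ∑' i, EMetric.diam (U i) ^ s < b := by
  unfold hausdorffContent at h
  obtain ⟨U, hU⟩ := iInf_lt_iff.mp h
  obtain ⟨h1, h2⟩ := iInf_lt_iff.mp hU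
  exact ⟨U, h1, h2⟩

set_option maxHeartbeats 2000000

/-- Frostman-type lemma: if `H^s_∞(E) = c > 0`, then there is a `(δ,s)`-set `P ⊆ E`
(`δ`-separated, with `#(P ∩ B(x,r)) ≤ (r/δ)^s` for all `x` and `r ≥ δ`) of cardinality
`#P ≥ C_d · c · δ^{-s}` for a constant `C_d > 0` depending only on `d`. -/
theorem stmt_3 (d : ℕ) :
    ∃ C : ℝ, 0 < C ∧
      ∀ (δ s c : ℝ) (E : Set (EuclideanSpace ℝ (Fin d))),
        0 < δ → 0 < s → 0 < c → hausdorffContent d s E = ENNReal.ofReal c →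
        ∃ P : Set (EuclideanSpace ℝ (Fin d)), P ⊆ E ∧ P.Finite ∧
          (∀ x ∈ P, ∀ y ∈ P, x ≠ y → δ ≤ dist x y) ∧
          (∀ (x : EuclideanSpace ℝ (Fin d)) (r : ℝ), δ ≤ r →
            ((P ∩ Metric.closedBall x r).ncard : ℝ) ≤ (r / δ) ^ s) ∧
          C * c * δ ^ (-s) ≤ (P.ncard : ℝ) := by
  refine ⟨((2:ℝ) ^ (6*d+4) * ((d:ℝ)+1) ^ d)⁻¹, by positivity, ?_⟩
  intro δ s c E hδ hs hc hH
  rcases Nat.eq_zero_or_pos d with hd0 | hd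
  · exfalso
    subst hd0
    have hsub : E.Subsingleton := fun a _ b _ => PiLp.ext fun i => Fin.elim0 i
    have h1 : hausdorffContent 0 s E ≤ 0 := by
      refine le_trans (hc_le_diam hs E) ?_
      rw [show EMetric.diam E = ediam E from rfl, EMetric.diam_subsingleton hsub, ENNReal.zero_rpow_of_pos hs]
    rw [hH, le_zero_iff, ENNReal.ofReal_eq_zero] at h1
    linarith
  -- ### bounded reduction
  have hlt : hausdorffContent d s E < ENNReal.ofReal c + ENNReal.ofReal (c/4) := by
    rw [hH]
    exact ENNReal.lt_add_right ENNReal.ofReal_ne_top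
      (by rw [Ne, ENNReal.ofReal_eq_zero]; push_neg; linarith)
  obtain ⟨U, hUcov, hUsum⟩ := hc_exists_cover hlt
  have hXne : ENNReal.ofReal c + ENNReal.ofReal (c/4) ≠ ⊤ :=
    ENNReal.add_ne_top.mpr ⟨ENNReal.ofReal_ne_top, ENNReal.ofReal_ne_top⟩
  have hUtot : ∑' i, EMetric.diam (U i) ^ s ≠ ⊤ := (hUsum.trans hXne.lt_top).ne
  obtain ⟨N, hN⟩ : ∃ N, ∑' i, EMetric.diam (U (i + N)) ^ s < ENNReal.ofReal (c/4) := by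
    have ht := ENNReal.tendsto_sum_nat_add (fun i => EMetric.diam (U i) ^ s) hUtot
    exact (ht.eventually_lt_const (ENNReal.ofReal_pos.2 (by linarith))).exists
  set E' : Set (Pt d) := E \ ⋃ i, U (i + N) with hE'def
  have hE'subE : E' ⊆ E := diff_subset
  have hsplit : hausdorffContent d s E ≤ hausdorffContent d s E' + ENNReal.ofReal (c/4) := by
    have hsub2 : E ⊆ E' ∪ (E ∩ ⋃ i, U (i + N)) := by
      intro y hy
      by_cases h : y ∈ ⋃ i, U (i + N)
      · exact Or.inr ⟨hy, h⟩
      · exact Or.inl ⟨hy, h⟩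
    have h3 : hausdorffContent d s (E ∩ ⋃ i, U (i + N)) ≤ ENNReal.ofReal (c/4) :=
      le_trans (hc_le_of_cover (fun i => U (i + N)) inter_subset_right) hN.le
    exact le_trans (hc_mono hsub2) (le_trans (hc_union _ _) (add_le_add_right h3 _))
  have hE'content : ENNReal.ofReal (c/2) ≤ hausdorffContent d s E' := by
    have h4 : ENNReal.ofReal (c/2) + ENNReal.ofReal (c/4) ≤
        hausdorffContent d s E' + ENNReal.ofReal (c/4) := by
      calc ENNReal.ofReal (c/2) + ENNReal.ofReal (c/4)
          = ENNReal.ofReal (c/2 + c/4) := (ENNReal.ofReal_add (by linarith) (by linarith)).symm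
        _ ≤ ENNReal.ofReal c := ENNReal.ofReal_le_ofReal (by linarith)
        _ = hausdorffContent d s E := hH.symm
        _ ≤ _ := hsplit
    exact (ENNReal.add_le_add_iff_right ENNReal.ofReal_ne_top).mp h4
  have hE'bdd : Bornology.IsBounded E' := by
    have hUbd : ∀ i, Bornology.IsBounded (U i) := by
      intro i
      rw [isBounded_iff_ediam_ne_top]
      intro htop
      apply hUtot
      have h5 : EMetric.diam (U i) ^ s = ⊤ := by rw [show EMetric.diam (U i) = ediam (U i) from rfl, htop]; exact ENNReal.top_rpow_of_pos hs
      exact top_unique (h5 ▸ ENNReal.le_tsum i)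
    have hsub3 : E' ⊆ ⋃ i ∈ Finset.range N, U i := by
      intro y hy
      obtain ⟨hyE, hynot⟩ := hy
      obtain ⟨i, hi⟩ := mem_iUnion.mp (hUcov hyE)
      have hiN : i < N := by
        by_contra hge
        push_neg at hge
        exact hynot (mem_iUnion.2 ⟨i - N, by rwa [Nat.sub_add_cancel hge]⟩)
      exact mem_biUnion (Finset.mem_range.2 hiN) hi
    have hfin : ∀ F : Finset ℕ, Bornology.IsBounded (⋃ i ∈ F, U i) := by
      intro F
      induction F using Finset.induction with
      | empty => simp
      | insert _ _ h ih =>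
          rw [Finset.set_biUnion_insert]
          exact (hUbd _).union ih
    exact (hfin (Finset.range N)).subset hsub3
  -- ### s ≤ d
  rcases le_or_gt s (d:ℝ) with hsd | hsd
  swap
  · exfalso
    rw [hc_zero_of_gt hd hsd hE'bdd, le_zero_iff, ENNReal.ofReal_eq_zero] at hE'content
    linarith
  -- ### parameters
  set A : ℝ := 2 * (2:ℝ) ^ (((d:ℝ)+2)/s) with hA
  have hArpow : (1:ℝ) ≤ (2:ℝ) ^ (((d:ℝ)+2)/s) :=
    Real.one_le_rpow one_le_two (by positivity)
  have hA2 : (2:ℝ) ≤ A := by rw [hA]; linarith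
  have hApos : (0:ℝ) < A := lt_of_lt_of_le two_pos hA2
  have hAs : A ^ s = (2:ℝ) ^ s * (2:ℝ) ^ ((d:ℝ)+2) := by
    rw [hA, Real.mul_rpow (by norm_num) (Real.rpow_nonneg (by norm_num) _)]
    congr 1
    rw [← Real.rpow_mul (by norm_num : (0:ℝ) ≤ 2), div_mul_cancel₀ _ hs.ne']
  set δ₀ : ℝ := 8 * A * δ with hδ₀def
  have hδ₀ : 0 < δ₀ := by positivity
  set τ : ℝ := A * δ with hτdef
  have hτ : 0 < τ := by positivity
  have hsqrt_pos : (0:ℝ) < Real.sqrt d := Real.sqrt_pos.2 (by exact_mod_cast hd)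
  -- ### top scale
  obtain ⟨R₀, hR₀⟩ := hE'bdd.subset_closedBall 0
  set R : ℝ := |R₀| + 1 with hRdef
  have hR1 : (1:ℝ) ≤ R := by rw [hRdef]; linarith [abs_nonneg R₀]
  have hRE' : E' ⊆ closedBall 0 R :=
    hR₀.trans (closedBall_subset_closedBall (by rw [hRdef]; linarith [le_abs_self R₀]))
  obtain ⟨n, hn⟩ := pow_unbounded_of_one_lt ((2*R+2)/δ₀) (one_lt_two (α := ℝ))
  have hℓn : 2*R+2 < δ₀ * 2 ^ n := by
    rw [div_lt_iff₀ hδ₀] at hn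
    linarith
  set o : Fin d → ℝ := fun _ => -((δ₀ * 2 ^ n)/2) with ho
  have hbox : E' ⊆ {y | br o (δ₀ * 2 ^ n) y 0} := by
    intro y hy i
    have hyc : |y i| ≤ R := by
      have h0 : (0 : Pt d) i = 0 := rfl
      have hcd := coord_le_dist y 0 i
      rw [h0, sub_zero] at hcd
      exact hcd.trans (mem_closedBall.mp (hRE' hy))
    have habs := abs_le.mp hyc
    have hpos : (0:ℝ) < δ₀ * 2 ^ n := by positivity
    have hfy : ⌊(y i - o i) / (δ₀ * 2 ^ n)⌋ = 0 := by
      rw [Int.floor_eq_zero_iff]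
      constructor
      · apply div_nonneg _ hpos.le
        simp only [ho]
        linarith
      · rw [div_lt_one hpos]
        simp only [ho]
        linarith
    have hf0 : ⌊((0 : Pt d) i - o i) / (δ₀ * 2 ^ n)⌋ = 0 := by
      have h0 : (0 : Pt d) i = 0 := rfl
      rw [Int.floor_eq_zero_iff, h0]
      constructor
      · apply div_nonneg _ hpos.le
        simp only [ho]
        linarith
      · rw [div_lt_one hpos]
        simp only [ho]
        linarith
    rw [hfy, hf0]
  obtain ⟨P₁, hP₁sub, hP₁cnt, hP₁mass⟩ := main hd hs hδ₀ o n 0 E' hbox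
  obtain ⟨P, hPsub, hPsep, hPcov⟩ := net hτ P₁
  have hPcnt : ∀ k, k ≤ n → ∀ z : Pt d,
      (P.filter (fun p => br o (δ₀ * 2 ^ k) p z)).card ≤ T s k :=
    fun k hk z => le_trans (Finset.card_le_card
      (Finset.filter_subset_filter _ hPsub)) (hP₁cnt k hk z)
  have hP₁top : P₁.card ≤ T s n := by
    have he : P₁.filter (fun p => br o (δ₀ * 2 ^ n) p 0) = P₁ := by
      rw [Finset.filter_eq_self]
      intro p hp
      exact hbox (hP₁sub hp)
    calc P₁.card = (P₁.filter (fun p => br o (δ₀ * 2 ^ n) p 0)).card := by rw [he]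
      _ ≤ T s n := hP₁cnt n le_rfl 0
  refine ⟨↑P, (Finset.coe_subset.mpr hPsub).trans (hP₁sub.trans hE'subE),
    P.finite_toSet, ?_, ?_, ?_⟩
  · -- separation
    intro x hx y hy hxy
    have hτδ : δ ≤ τ := by rw [hτdef]; nlinarith
    have := hPsep x (Finset.mem_coe.mp hx) y (Finset.mem_coe.mp hy) hxy
    linarith
  · -- ball counting
    intro x r hr
    have hset : (↑P ∩ closedBall x r) = ↑(P.filter (fun p => p ∈ closedBall x r)) := by
      ext y
      simp only [Finset.coe_filter, mem_inter_iff, Finset.mem_coe, mem_setOf_eq]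
    rw [hset, Set.ncard_coe_finset]
    have hrδ1 : (1:ℝ) ≤ r / δ := by rw [le_div_iff₀ hδ]; linarith
    have hrpow1 : (1:ℝ) ≤ (r/δ) ^ s := Real.one_le_rpow hrδ1 hs.le
    by_cases hcase : r < τ/2
    · have hcard1 : (P.filter (fun p => p ∈ closedBall x r)).card ≤ 1 := by
        rw [Finset.card_le_one]
        intro a ha b hb
        rw [Finset.mem_filter] at ha hb
        by_contra hab
        have hsep := hPsep a ha.1 b hb.1 hab
        have hd2 : dist a b ≤ 2*r := by
          have h1 := dist_triangle a x b
          have h2 : dist a x ≤ r := mem_closedBall.mp ha.2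
          have h3 : dist x b ≤ r := by rw [dist_comm]; exact mem_closedBall.mp hb.2
          linarith
        linarith
      calc ((P.filter (fun p => p ∈ closedBall x r)).card : ℝ) ≤ 1 := by exact_mod_cast hcard1
        _ ≤ (r/δ) ^ s := hrpow1
    · push_neg at hcase
      by_cases hcase2 : 2*r ≤ δ₀ * 2 ^ n
      · have hex : ∃ k, 2*r ≤ δ₀ * 2 ^ k := ⟨n, hcase2⟩
        set k := Nat.find hex with hkdef
        have hkspec : 2*r ≤ δ₀ * 2 ^ k := Nat.find_spec hex
        have hkn : k ≤ n := Nat.find_le hcase2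
        have hcnt := box_cover (o := o) (by positivity : (0:ℝ) < δ₀ * 2 ^ k)
          (by linarith : (0:ℝ) ≤ r) hkspec P (T s k) (hPcnt k hkn) x
        have hnum : ((2:ℝ) ^ d * T s k) ≤ (r/δ) ^ s := by
          rcases Nat.eq_zero_or_pos k with hk0 | hkpos
          · rw [hk0, T_zero]
            have h6 : (2:ℝ) ^ (((d:ℝ)+2)/s) ≤ r/δ := by
              have hAd : A/2 = (2:ℝ) ^ (((d:ℝ)+2)/s) := by rw [hA]; ring
              rw [← hAd, div_le_div_iff₀ two_pos hδ]
              -- A * δ ≤ r * 2  from  τ/2 ≤ r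
              rw [hτdef] at hcase
              linarith
            have h5 : (2:ℝ) ^ ((d:ℝ)+2) ≤ (r/δ) ^ s := by
              calc (2:ℝ) ^ ((d:ℝ)+2) = ((2:ℝ) ^ (((d:ℝ)+2)/s)) ^ s := by
                    rw [← Real.rpow_mul (by norm_num : (0:ℝ) ≤ 2), div_mul_cancel₀ _ hs.ne']
                _ ≤ (r/δ) ^ s := Real.rpow_le_rpow (Real.rpow_nonneg (by norm_num) _) h6 hs.le
            have h7 : (2:ℝ) ^ d ≤ (2:ℝ) ^ ((d:ℝ)+2) := by
              rw [← Real.rpow_natCast 2 d]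
              exact Real.rpow_le_rpow_of_exponent_le one_le_two (by linarith)
            push_cast
            linarith
          · have hmin := Nat.find_min hex (show k - 1 < k by omega)
            push_neg at hmin
            have h10 : (2:ℝ) ^ k = 2 * 2 ^ (k-1) := by
              have hk1 : k - 1 + 1 = k := by omega
              calc (2:ℝ) ^ k = 2 ^ (k-1+1) := by rw [hk1]
                _ = 2 * 2 ^ (k-1) := by rw [pow_succ]; ring
            have h8 : (2:ℝ) ^ k < 4*r/δ₀ := by
              rw [h10, lt_div_iff₀ hδ₀]
              nlinarith [hmin]
            have hTk : (T s k : ℝ) ≤ (4*r/δ₀) ^ s :=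
              le_trans (T_le k) (Real.rpow_le_rpow (by positivity) h8.le hs.le)
            have hfactor : (2:ℝ) ^ d ≤ (2*A) ^ s := by
              have hm : (2*A) ^ s = (2:ℝ) ^ s * A ^ s := Real.mul_rpow (by norm_num) hApos.le
              rw [hm, hAs]
              have h2s : (1:ℝ) ≤ (2:ℝ) ^ s := Real.one_le_rpow one_le_two hs.le
              have hdd : (2:ℝ) ^ (d:ℝ) ≤ (2:ℝ) ^ ((d:ℝ)+2) :=
                Real.rpow_le_rpow_of_exponent_le one_le_two (by linarith)
              have hp1 : (0:ℝ) ≤ (2:ℝ) ^ ((d:ℝ)+2) := Real.rpow_nonneg (by norm_num) _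
              rw [← Real.rpow_natCast 2 d]
              calc (2:ℝ) ^ (d:ℝ) ≤ (2:ℝ) ^ ((d:ℝ)+2) := hdd
                _ ≤ 2 ^ s * 2 ^ ((d:ℝ)+2) := le_mul_of_one_le_left hp1 h2s
                _ ≤ 2 ^ s * (2 ^ s * 2 ^ ((d:ℝ)+2)) :=
                    mul_le_mul_of_nonneg_left (le_mul_of_one_le_left hp1 h2s)
                      (Real.rpow_nonneg (by norm_num) _)
            have hsplit2 : r/δ = (2*A) * (4*r/δ₀) := by
              rw [hδ₀def]
              field_simp
              ring
            have hr4pos : (0:ℝ) ≤ 4*r/δ₀ := div_nonneg (by linarith [lt_of_lt_of_le hδ hr]) hδ₀.le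
            calc (2:ℝ) ^ d * T s k ≤ (2*A) ^ s * (4*r/δ₀) ^ s :=
                  mul_le_mul hfactor hTk (Nat.cast_nonneg _) (Real.rpow_nonneg (by linarith : (0:ℝ) ≤ 2*A) _)
              _ = ((2*A) * (4*r/δ₀)) ^ s := (Real.mul_rpow (by linarith : (0:ℝ) ≤ 2*A) hr4pos).symm
              _ = (r/δ) ^ s := by rw [← hsplit2]
        calc ((P.filter (fun p => p ∈ closedBall x r)).card : ℝ)
            ≤ (2:ℝ) ^ d * T s k := by exact_mod_cast hcnt
          _ ≤ (r/δ) ^ s := hnum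
      · push_neg at hcase2
        have hcard : (P.filter (fun p => p ∈ closedBall x r)).card ≤ T s n :=
          le_trans (Finset.card_filter_le _ _) (le_trans (Finset.card_le_card hPsub) hP₁top)
        have hnum : (T s n : ℝ) ≤ (r/δ) ^ s := by
          have h2 : ((2:ℝ) ^ n) ≤ 2*r/δ₀ := by
            rw [le_div_iff₀ hδ₀]
            nlinarith
          have h3 : 2*r/δ₀ ≤ r/δ := by
            rw [div_le_div_iff₀ hδ₀ hδ, hδ₀def]
            have hr0 : (0:ℝ) < r := lt_of_lt_of_le hδ hr
            nlinarith [mul_le_mul_of_nonneg_right hA2 (mul_nonneg hr0.le hδ.le)]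
          calc (T s n : ℝ) ≤ ((2:ℝ) ^ n) ^ s := T_le n
            _ ≤ (r/δ) ^ s := Real.rpow_le_rpow (by positivity) (h2.trans h3) hs.le
        calc ((P.filter (fun p => p ∈ closedBall x r)).card : ℝ) ≤ (T s n : ℝ) := by
              exact_mod_cast hcard
          _ ≤ (r/δ) ^ s := hnum
  · -- cardinality
    have hb1 : P₁.card ≤ 2 ^ d * P.card := by
      have hsub4 : P₁ ⊆ P.biUnion (fun p => P₁.filter (fun q => q ∈ closedBall p τ)) := by
        intro q hq
        obtain ⟨p, hp, hpd⟩ := hPcov q hq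
        exact Finset.mem_biUnion.2 ⟨p, hp, Finset.mem_filter.2 ⟨hq, mem_closedBall.mpr hpd.le⟩⟩
      have hball : ∀ p : Pt d, (P₁.filter (fun q => q ∈ closedBall p τ)).card ≤ 2 ^ d * 1 := by
        intro p
        have hS0 : ∀ z : Pt d, (P₁.filter (fun q => br o (δ₀ * 2 ^ 0) q z)).card ≤ 1 := by
          intro z
          have := hP₁cnt 0 (Nat.zero_le n) z
          rwa [T_zero] at this
        refine box_cover (o := o) (by positivity : (0:ℝ) < δ₀ * 2 ^ 0) hτ.le ?_ P₁ 1 hS0 p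
        rw [pow_zero, mul_one, hδ₀def, hτdef]
        nlinarith
      calc P₁.card ≤ (P.biUnion (fun p => P₁.filter (fun q => q ∈ closedBall p τ))).card :=
            Finset.card_le_card hsub4
        _ ≤ ∑ p ∈ P, (P₁.filter (fun q => q ∈ closedBall p τ)).card := Finset.card_biUnion_le
        _ ≤ ∑ _p ∈ P, 2 ^ d * 1 := Finset.sum_le_sum fun p _ => hball p
        _ = 2 ^ d * P.card := by rw [Finset.sum_const, smul_eq_mul]; ring
    set K' : ℝ := 2 * (Real.sqrt d * δ₀) ^ s with hK'
    have hK'pos : 0 < K' := by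
      rw [hK']
      have := Real.rpow_pos_of_pos (show (0:ℝ) < Real.sqrt d * δ₀ by positivity) s
      linarith
    have hmassR : c/2 ≤ P₁.card * K' := by
      have h5 : ENNReal.ofReal (c/2) ≤ ENNReal.ofReal (P₁.card * K') := by
        refine le_trans hE'content (le_trans hP₁mass ?_)
        rw [ENNReal.ofReal_mul (by positivity : (0:ℝ) ≤ (P₁.card:ℝ)), ENNReal.ofReal_natCast]
      exact (ENNReal.ofReal_le_ofReal_iff (by positivity)).mp h5
    rw [Set.ncard_coe_finset]
    have hc2 : c ≤ 2^(d+1) * K' * P.card := by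
      have hcast : (P₁.card : ℝ) ≤ 2 ^ d * P.card := by exact_mod_cast hb1
      have hpow : (2:ℝ)^(d+1) = 2*2^d := by rw [pow_succ]; ring
      rw [hpow]
      nlinarith [mul_le_mul_of_nonneg_right hcast hK'pos.le]
    have hfact : 2^(d+1) * K' * δ ^ (-s) ≤ (2:ℝ) ^ (6*d+4) * ((d:ℝ)+1) ^ d := by
      have e1 : 2^(d+1) * K' * δ ^ (-s) = 2^(d+2) * ((Real.sqrt d * δ₀ / δ) ^ s) := by
        have ed : (Real.sqrt d * δ₀ / δ) ^ s = (Real.sqrt d * δ₀) ^ s * ((δ:ℝ) ^ s)⁻¹ := by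
          rw [Real.div_rpow (by positivity) hδ.le, div_eq_mul_inv]
        rw [ed, Real.rpow_neg hδ.le, hK']
        ring
      have e2 : Real.sqrt d * δ₀ / δ = 16 * Real.sqrt d * (2:ℝ) ^ (((d:ℝ)+2)/s) := by
        rw [hδ₀def, hA]
        field_simp
        ring
      have e3 : (16 * Real.sqrt d * (2:ℝ) ^ (((d:ℝ)+2)/s)) ^ s
          = (16:ℝ) ^ s * (Real.sqrt d) ^ s * (2:ℝ) ^ ((d:ℝ)+2) := by
        rw [Real.mul_rpow (by positivity) (Real.rpow_nonneg (by norm_num) _),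
          Real.mul_rpow (by norm_num) hsqrt_pos.le,
          ← Real.rpow_mul (by norm_num : (0:ℝ) ≤ 2), div_mul_cancel₀ _ hs.ne']
      have e4 : (16:ℝ) ^ s ≤ (2:ℝ) ^ (4*d) := by
        calc (16:ℝ) ^ s ≤ (16:ℝ) ^ (d:ℝ) :=
              Real.rpow_le_rpow_of_exponent_le (by norm_num) hsd
          _ = (2:ℝ) ^ (4*d) := by
              rw [Real.rpow_natCast, show (16:ℝ) = 2^(4:ℕ) by norm_num, ← pow_mul]
      have e5 : (Real.sqrt d) ^ s ≤ ((d:ℝ)+1) ^ d := by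
        have h1 : Real.sqrt d ≤ (d:ℝ)+1 := by
          have h2 : Real.sqrt d ≤ Real.sqrt (((d:ℝ)+1)^2) :=
            Real.sqrt_le_sqrt (by nlinarith [show (0:ℝ) ≤ (d:ℝ) from Nat.cast_nonneg d, sq_nonneg ((d:ℝ))])
          rwa [Real.sqrt_sq (by positivity)] at h2
        calc (Real.sqrt d) ^ s ≤ ((d:ℝ)+1) ^ s :=
              Real.rpow_le_rpow hsqrt_pos.le h1 hs.le
          _ ≤ ((d:ℝ)+1) ^ (d:ℝ) :=
              Real.rpow_le_rpow_of_exponent_le (by linarith [show (0:ℝ) ≤ (d:ℝ) from Nat.cast_nonneg d]) hsd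
          _ = ((d:ℝ)+1) ^ d := Real.rpow_natCast _ d
      have e6 : (2:ℝ) ^ ((d:ℝ)+2) = (2:ℝ) ^ (d+2 : ℕ) := by
        rw [← Real.rpow_natCast 2 (d+2)]
        congr 1
        push_cast
        ring
      rw [e1, e2, e3, e6]
      have h16pos : (0:ℝ) ≤ (16:ℝ) ^ s := Real.rpow_nonneg (by norm_num) _
      have hsqs : (0:ℝ) ≤ (Real.sqrt d) ^ s := Real.rpow_nonneg hsqrt_pos.le _
      calc (2:ℝ)^(d+2) * ((16:ℝ) ^ s * (Real.sqrt d) ^ s * (2:ℝ) ^ (d+2:ℕ))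
          ≤ (2:ℝ)^(d+2) * ((2:ℝ) ^ (4*d) * (((d:ℝ)+1) ^ d) * (2:ℝ) ^ (d+2:ℕ)) := by
            have hp : (0:ℝ) ≤ (2:ℝ)^(d+2) := by positivity
            have hq : (0:ℝ) ≤ (2:ℝ)^(d+2:ℕ) := by positivity
            exact mul_le_mul_of_nonneg_left
              (mul_le_mul_of_nonneg_right (mul_le_mul e4 e5 hsqs (by positivity)) hq) hp
        _ = (2:ℝ) ^ (6*d+4) * ((d:ℝ)+1) ^ d := by
            rw [show 6*d+4 = (d+2) + (4*d) + (d+2) by omega, pow_add, pow_add]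
            ring
    have hCpos : (0:ℝ) < ((2:ℝ) ^ (6*d+4) * ((d:ℝ)+1) ^ d) := by positivity
    have hδs : (0:ℝ) < δ ^ (-s) := Real.rpow_pos_of_pos hδ _
    set Cc : ℝ := ((2:ℝ) ^ (6*d+4) * ((d:ℝ)+1) ^ d)⁻¹ with hCc
    have hCcpos : 0 < Cc := by rw [hCc]; positivity
    calc Cc * c * δ ^ (-s) ≤ Cc * (2^(d+1) * K' * P.card) * δ ^ (-s) := by
          have := mul_le_mul_of_nonneg_left hc2 hCcpos.le
          nlinarith
      _ = (P.card : ℝ) * (Cc * (2^(d+1) * K' * δ ^ (-s))) := by ring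
      _ ≤ (P.card : ℝ) * (Cc * ((2:ℝ) ^ (6*d+4) * ((d:ℝ)+1) ^ d)) := by
          have h7 := mul_le_mul_of_nonneg_left hfact hCcpos.le
          have h8 : (0:ℝ) ≤ (P.card : ℝ) := Nat.cast_nonneg _
          nlinarith
      _ = (P.card : ℝ) := by
          rw [hCc, inv_mul_cancel₀ hCpos.ne', mul_one]
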